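/- Let (M,U) be an MLR for 𝔽. If ∂_{j,ℓ}(M) = 0 for all j ∈ {1,…,N} and all ℓ ∈ ℤ, then also ∂_{j,ℓ}(U) = 0 for all j ∈ {1,…,N} and all ℓ ∈ ℤ. -/

import Mathlib

open MvPolynomial

/-- Variables: `none` is the variable `n`; `some (j, ℓ)` is the variable `u^j_ℓ`. -/
abbrev Var (N : ℕ) := Option (Fin N × ℤ)

/-- The polynomial ring over `K` in the variables `n` and `u^j_ℓ`. -/
abbrev PolyF (K : Type) [Field K] (N : ℕ) := MvPolynomial (Var N) K

/-- The field `F` of rational functions over `K` in the variables `n` and `u^j_ℓ`. -/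
abbrev FF (K : Type) [Field K] (N : ℕ) := FractionRing (PolyF K N)

/-- The image in `F` of the variable `v`. -/
noncomputable def gen (K : Type) [Field K] (N : ℕ) (v : Var N) : FF K N :=
  algebraMap (PolyF K N) (FF K N) (X v)

/-- `f ∈ F` depends only on `n` and the variables `u^j_ℓ` with `α ≤ ℓ ≤ β`:
`f` lies in the subfield generated by `K`, `n` and these variables. -/
def DependsOnly (K : Type) [Field K] (N : ℕ) (α β : ℤ) (f : FF K N) : Prop :=
  f ∈ Subfield.closure (Set.range (algebraMap K (FF K N)) ∪ {gen K N none} ∪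
    { x | ∃ (j : Fin N) (ℓ : ℤ), α ≤ ℓ ∧ ℓ ≤ β ∧ x = gen K N (some (j, ℓ)) })

/-- The total derivative `D_t(f) = Σ_{ℓ,ξ} S^ℓ(𝔽^ξ)·∂_{ξ,ℓ}(f)` associated with the
right-hand side `𝔽 : Fin N → F` (the sum over `ℓ ∈ ℤ` is finite, taken as `finsum`). -/
noncomputable def Dt (K : Type) [Field K] (N : ℕ) (S : FF K N ≃+* FF K N)
    (P : Fin N → ℤ → FF K N → FF K N) (Fv : Fin N → FF K N) (f : FF K N) : FF K N :=
  ∑ᶠ ℓ : ℤ, ∑ ξ : Fin N, (S ^ ℓ) (Fv ξ) * P ξ ℓ f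

namespace Stmt1Aux

variable {K : Type} [Field K] {N : ℕ}

/-- A `σ`-twisted derivation-like pair of properties. -/
def Tw (σ : FF K N →+* FF K N) (D : FF K N → FF K N) : Prop :=
  (∀ x y, D (x + y) = D x + D y) ∧ (∀ x y, D (x * y) = σ x * D y + D x * σ y)

lemma Tw.zero {σ : FF K N →+* FF K N} {D : FF K N → FF K N} (h : Tw σ D) : D 0 = 0 := by
  have := h.1 0 0
  rw [add_zero] at this
  exact (left_eq_add.mp this)

lemma Tw.one {σ : FF K N →+* FF K N} {D : FF K N → FF K N} (h : Tw σ D) : D 1 = 0 := by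
  have := h.2 1 1
  rw [mul_one, map_one, one_mul, mul_one] at this
  exact (left_eq_add.mp this)

lemma Tw.neg {σ : FF K N →+* FF K N} {D : FF K N → FF K N} (h : Tw σ D) (x : FF K N) :
    D (-x) = -D x := by
  have := h.1 x (-x)
  rw [add_neg_cancel, h.zero] at this
  linear_combination -this

lemma Tw.inv_eq {σ : FF K N →+* FF K N} {D : FF K N → FF K N} (h : Tw σ D) {x : FF K N}
    (hx : x ≠ 0) : D x⁻¹ = (σ x)⁻¹ * (-(D x * σ x⁻¹)) := by
  have h1 : D (x * x⁻¹) = σ x * D x⁻¹ + D x * σ x⁻¹ := h.2 x x⁻¹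
  rw [mul_inv_cancel₀ hx, h.one] at h1
  have hσ : σ x ≠ 0 := by
    simpa using (map_ne_zero σ).mpr hx
  have key : σ x * D x⁻¹ = -(D x * σ x⁻¹) := by linear_combination -h1
  rw [← key, inv_mul_cancel_left₀ hσ]

/-- The set where two twisted derivations agree is a subfield. -/
def agreeSubfield (σ : FF K N →+* FF K N) (D1 D2 : FF K N → FF K N)
    (h1 : Tw σ D1) (h2 : Tw σ D2) : Subfield (FF K N) where
  carrier := {x | D1 x = D2 x}
  zero_mem' := by simp only [Set.mem_setOf_eq, h1.zero, h2.zero]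
  one_mem' := by simp only [Set.mem_setOf_eq, h1.one, h2.one]
  add_mem' := by
    intro x y hx hy
    simp only [Set.mem_setOf_eq, h1.1, h2.1] at *
    rw [hx, hy]
  mul_mem' := by
    intro x y hx hy
    simp only [Set.mem_setOf_eq, h1.2, h2.2] at *
    rw [hx, hy]
  neg_mem' := by
    intro x hx
    simp only [Set.mem_setOf_eq, h1.neg, h2.neg] at *
    rw [hx]
  inv_mem' := by
    intro x hx
    by_cases hx0 : x = 0
    · subst hx0
      simp only [inv_zero, Set.mem_setOf_eq, h1.zero, h2.zero]
    · simp only [Set.mem_setOf_eq] at *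
      rw [h1.inv_eq hx0, h2.inv_eq hx0, hx]

lemma mem_agreeSubfield {σ : FF K N →+* FF K N} {D1 D2 : FF K N → FF K N}
    {h1 : Tw σ D1} {h2 : Tw σ D2} {x : FF K N} :
    x ∈ agreeSubfield σ D1 D2 h1 h2 ↔ D1 x = D2 x := Iff.rfl

lemma algebraMap_C (a : K) :
    algebraMap (PolyF K N) (FF K N) (C a) = algebraMap K (FF K N) a := by
  rw [← MvPolynomial.algebraMap_eq, ← IsScalarTower.algebraMap_apply]

lemma exists_finset_poly (r : PolyF K N) :
    ∃ s : Finset (Var N), algebraMap (PolyF K N) (FF K N) r ∈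
      Subfield.closure (Set.range (algebraMap K (FF K N)) ∪ gen K N '' ↑s) := by
  induction r using MvPolynomial.induction_on with
  | C a => exact ⟨∅, Subfield.subset_closure (Or.inl ⟨a, (algebraMap_C a).symm⟩)⟩
  | add p q hp hq =>
    obtain ⟨s1, h1⟩ := hp
    obtain ⟨s2, h2⟩ := hq
    refine ⟨s1 ∪ s2, ?_⟩
    rw [RingHom.map_add]
    have m1 : (Set.range (algebraMap K (FF K N)) ∪ gen K N '' ↑s1) ⊆
        (Set.range (algebraMap K (FF K N)) ∪ gen K N '' ↑(s1 ∪ s2)) :=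
      Set.union_subset_union Set.Subset.rfl
        (Set.image_mono (by simp [Finset.coe_subset]))
    have m2 : (Set.range (algebraMap K (FF K N)) ∪ gen K N '' ↑s2) ⊆
        (Set.range (algebraMap K (FF K N)) ∪ gen K N '' ↑(s1 ∪ s2)) :=
      Set.union_subset_union Set.Subset.rfl
        (Set.image_mono (by simp [Finset.coe_subset]))
    exact add_mem (Subfield.closure_mono m1 h1) (Subfield.closure_mono m2 h2)
  | mul_X p v hp =>
    obtain ⟨s1, h1⟩ := hp
    refine ⟨insert v s1, ?_⟩
    rw [RingHom.map_mul]
    have m1 : (Set.range (algebraMap K (FF K N)) ∪ gen K N '' ↑s1) ⊆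
        (Set.range (algebraMap K (FF K N)) ∪ gen K N '' ↑(insert v s1)) :=
      Set.union_subset_union Set.Subset.rfl
        (Set.image_mono (by simp [Finset.coe_subset]))
    refine mul_mem (Subfield.closure_mono m1 h1) (Subfield.subset_closure (Or.inr ?_))
    exact ⟨v, by simp, rfl⟩

lemma exists_finset (f : FF K N) :
    ∃ s : Finset (Var N), f ∈
      Subfield.closure (Set.range (algebraMap K (FF K N)) ∪ gen K N '' ↑s) := by
  obtain ⟨p, q, hq, hpq⟩ := IsFractionRing.div_surjective (A := PolyF K N) f
  obtain ⟨s1, h1⟩ := exists_finset_poly (K := K) (N := N) p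
  obtain ⟨s2, h2⟩ := exists_finset_poly (K := K) (N := N) q
  refine ⟨s1 ∪ s2, ?_⟩
  have m1 : (Set.range (algebraMap K (FF K N)) ∪ gen K N '' ↑s1) ⊆
      (Set.range (algebraMap K (FF K N)) ∪ gen K N '' ↑(s1 ∪ s2)) :=
    Set.union_subset_union Set.Subset.rfl
      (Set.image_mono (by simp [Finset.coe_subset]))
  have m2 : (Set.range (algebraMap K (FF K N)) ∪ gen K N '' ↑s2) ⊆
      (Set.range (algebraMap K (FF K N)) ∪ gen K N '' ↑(s1 ∪ s2)) :=
    Set.union_subset_union Set.Subset.rfl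
      (Set.image_mono (by simp [Finset.coe_subset]))
  rw [← hpq]
  exact div_mem (Subfield.closure_mono m1 h1) (Subfield.closure_mono m2 h2)

end Stmt1Aux

set_option maxHeartbeats 2000000 in
open Stmt1Aux in
/-- `F` is the field of rational functions over a char-0 field `K` in `n`, `u^j_ℓ`;
`S` is the field automorphism over `K` with `S(n) = n+1`, `S(u^j_ℓ) = u^j_{ℓ+1}`
(`S` is quantified over all automorphisms with these properties; there is exactly one);
`P j ℓ = ∂/∂u^j_ℓ` are the partial derivatives (quantified by their characterizing
properties: `K`-linear derivations with the standard values on the variables).  Given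
`𝔽 = (𝔽¹,…,𝔽^N)` depending only on `n, u_a,…,u_b`, `D_t` is the associated total
derivative, and an MLR for `𝔽` is a pair `(M,U)` with `det M ≠ 0` and
`D_t(M) = S(U)·M − M·U`.  Claim: if `(M,U)` is an MLR for `𝔽` and `∂_{j,ℓ}(M) = 0`
for all `j, ℓ`, then `∂_{j,ℓ}(U) = 0` for all `j, ℓ`. -/
theorem stmt_1 {d N : ℕ} (hd : 0 < d) (hN : 0 < N)
    (K : Type) [Field K] [CharZero K]
    (S : FF K N ≃+* FF K N)
    (hSK : ∀ c : K, S (algebraMap K (FF K N) c) = algebraMap K (FF K N) c)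
    (hSn : S (gen K N none) = gen K N none + 1)
    (hSu : ∀ (j : Fin N) (ℓ : ℤ), S (gen K N (some (j, ℓ))) = gen K N (some (j, ℓ + 1)))
    (P : Fin N → ℤ → FF K N → FF K N)
    (hPadd : ∀ j ℓ x y, P j ℓ (x + y) = P j ℓ x + P j ℓ y)
    (hPmul : ∀ j ℓ x y, P j ℓ (x * y) = x * P j ℓ y + P j ℓ x * y)
    (hPK : ∀ (j : Fin N) (ℓ : ℤ) (c : K), P j ℓ (algebraMap K (FF K N) c) = 0)
    (hPn : ∀ (j : Fin N) (ℓ : ℤ), P j ℓ (gen K N none) = 0)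
    (hPu : ∀ (j : Fin N) (ℓ : ℤ) (i : Fin N) (m : ℤ),
      P j ℓ (gen K N (some (i, m))) = if i = j ∧ m = ℓ then 1 else 0)
    (a b : ℤ) (hab : a ≤ b)
    (Fv : Fin N → FF K N) (hFv : ∀ ξ, DependsOnly K N a b (Fv ξ))
    (M U : Matrix (Fin d) (Fin d) (FF K N)) (hMdet : M.det ≠ 0)
    (hLax : M.map (Dt K N S P Fv) = U.map ⇑S * M - M * U)
    (hMconst : ∀ (j : Fin N) (ℓ : ℤ), M.map (P j ℓ) = 0) :
    ∀ (j : Fin N) (ℓ : ℤ), U.map (P j ℓ) = 0 := by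
  classical
  -- entrywise version of hMconst
  have hMc : ∀ (j : Fin N) (ℓ : ℤ) (i k : Fin d), P j ℓ (M i k) = 0 := by
    intro j ℓ i k
    have := congrFun (congrFun (hMconst j ℓ) i) k
    simpa [Matrix.map_apply] using this
  -- P is a twisted pair for id
  have htwP : ∀ (j : Fin N) (ℓ : ℤ), Tw (RingHom.id (FF K N)) (P j ℓ) := by
    intro j ℓ
    exact ⟨hPadd j ℓ, by intro x y; simpa using hPmul j ℓ x y⟩
  have htw0 : Tw (RingHom.id (FF K N)) (fun _ : FF K N => (0 : FF K N)) :=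
    ⟨by intro x y; simp, by intro x y; simp⟩
  have hP0 : ∀ (j : Fin N) (ℓ : ℤ), P j ℓ 0 = 0 := fun j ℓ => (htwP j ℓ).zero
  have hP1 : ∀ (j : Fin N) (ℓ : ℤ), P j ℓ 1 = 0 := fun j ℓ => (htwP j ℓ).one
  -- commutation: P j ℓ ∘ S = S ∘ P j (ℓ-1)
  have hcomm : ∀ (j : Fin N) (ℓ : ℤ) (f : FF K N), P j ℓ (S f) = S (P j (ℓ - 1) f) := by
    intro j ℓ f
    have h1 : Tw (S : FF K N →+* FF K N) (fun x => P j ℓ (S x)) := by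
      constructor
      · intro x y
        show P j ℓ (S (x + y)) = P j ℓ (S x) + P j ℓ (S y)
        rw [map_add, hPadd]
      · intro x y
        show P j ℓ (S (x * y)) = S x * P j ℓ (S y) + P j ℓ (S x) * S y
        rw [map_mul, hPmul]
    have h2 : Tw (S : FF K N →+* FF K N) (fun x => S (P j (ℓ - 1) x)) := by
      constructor
      · intro x y
        show S (P j (ℓ - 1) (x + y)) = S (P j (ℓ - 1) x) + S (P j (ℓ - 1) y)
        rw [hPadd, map_add]
      · intro x y
        show S (P j (ℓ - 1) (x * y)) = S x * S (P j (ℓ - 1) y) + S (P j (ℓ - 1) x) * S y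
        rw [hPmul, map_add, map_mul, map_mul]
    obtain ⟨s, hs⟩ := exists_finset f
    have hsub : (Set.range (algebraMap K (FF K N)) ∪ gen K N '' ↑s) ⊆
        (agreeSubfield _ _ _ h1 h2 : Subfield (FF K N)) := by
      rintro x (⟨c, rfl⟩ | ⟨v, hv, rfl⟩)
      · show P j ℓ (S _) = S (P j (ℓ - 1) _)
        rw [hSK, hPK, hPK, map_zero]
      · show P j ℓ (S (gen K N v)) = S (P j (ℓ - 1) (gen K N v))
        match v with
        | none =>
          rw [hSn, hPn, hPadd, hPn, hP1, map_zero, add_zero]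
        | some (i, m) =>
          rw [hSu, hPu, hPu]
          by_cases hc : i = j ∧ m = ℓ - 1
          · have : i = j ∧ m + 1 = ℓ := ⟨hc.1, by omega⟩
            rw [if_pos this, if_pos hc, map_one]
          · have : ¬(i = j ∧ m + 1 = ℓ) := by
              rintro ⟨hij, hm⟩; exact hc ⟨hij, by omega⟩
            rw [if_neg this, if_neg hc, map_zero]
    exact (Subfield.closure_le.mpr hsub) hs
  -- finiteness of the support of ℓ ↦ P j ℓ f
  have hfin : ∀ (j : Fin N) (f : FF K N), {ℓ : ℤ | P j ℓ f ≠ 0}.Finite := by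
    intro j f
    obtain ⟨s, hs⟩ := exists_finset f
    have hsubset : {ℓ : ℤ | P j ℓ f ≠ 0} ⊆ {ℓ : ℤ | (some (j, ℓ) : Var N) ∈ s} := by
      intro ℓ hℓ
      by_contra hmem
      apply hℓ
      have hsub : (Set.range (algebraMap K (FF K N)) ∪ gen K N '' ↑s) ⊆
          (agreeSubfield _ _ _ (htwP j ℓ) htw0 : Subfield (FF K N)) := by
        rintro x (⟨c, rfl⟩ | ⟨v, hv, rfl⟩)
        · exact hPK j ℓ c
        · show P j ℓ (gen K N v) = 0
          match v with
          | none => exact hPn j ℓ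
          | some (i, m) =>
            rw [hPu]
            have : ¬(i = j ∧ m = ℓ) := by
              rintro ⟨rfl, rfl⟩; exact hmem hv
            rw [if_neg this]
      exact (Subfield.closure_le.mpr hsub) hs
    refine Set.Finite.subset ?_ hsubset
    have : {ℓ : ℤ | (some (j, ℓ) : Var N) ∈ s} =
        (fun ℓ : ℤ => (some (j, ℓ) : Var N)) ⁻¹' ↑s := rfl
    rw [this]
    apply Set.Finite.preimage _ s.finite_toSet
    intro x _ y _ h
    simpa using h
  -- sums
  have Psum : ∀ (j : Fin N) (ℓ : ℤ) (g : Fin d → FF K N),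
      P j ℓ (∑ m, g m) = ∑ m, P j ℓ (g m) := by
    intro j ℓ g
    induction (Finset.univ : Finset (Fin d)) using Finset.induction_on with
    | empty => simpa using hP0 j ℓ
    | @insert _ _ hni ih => rw [Finset.sum_insert hni, Finset.sum_insert hni, hPadd, ih]
  -- Dt M = 0
  have hDtM : M.map (Dt K N S P Fv) = 0 := by
    ext i k
    simp only [Matrix.map_apply, Matrix.zero_apply, Dt]
    have hz : ∀ ℓ : ℤ, ∑ ξ : Fin N, (S ^ ℓ) (Fv ξ) * P ξ ℓ (M i k) = 0 := by
      intro ℓ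
      apply Finset.sum_eq_zero
      intro ξ _
      rw [hMc ξ ℓ i k, mul_zero]
    simp only [hz, finsum_zero]
  have key : U.map ⇑S * M = M * U := by
    rw [hDtM] at hLax
    exact sub_eq_zero.mp hLax.symm
  -- the recursion
  have hrel : ∀ (j : Fin N) (ℓ : ℤ),
      (U.map (P j (ℓ - 1))).map ⇑S * M = M * U.map (P j ℓ) := by
    intro j ℓ
    ext i k
    have hk : (U.map ⇑S * M) i k = (M * U) i k := by rw [key]
    rw [Matrix.mul_apply, Matrix.mul_apply] at hk
    have := congrArg (P j ℓ) hk
    rw [Psum, Psum] at this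
    rw [Matrix.mul_apply, Matrix.mul_apply]
    simp only [Matrix.map_apply]
    calc ∑ m, S (P j (ℓ - 1) (U i m)) * M m k
        = ∑ m, P j ℓ ((U.map ⇑S) i m * M m k) := by
          refine Finset.sum_congr rfl fun m _ => ?_
          rw [hPmul, hMc j ℓ m k, mul_zero, zero_add, Matrix.map_apply, hcomm]
      _ = ∑ m, P j ℓ (M i m * U m k) := this
      _ = ∑ m, M i m * P j ℓ (U m k) := by
          refine Finset.sum_congr rfl fun m _ => ?_
          rw [hPmul, hMc j ℓ i m, zero_mul, add_zero]
  intro j ℓ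
  -- bound on the support
  have hfinU : {ℓ : ℤ | U.map (P j ℓ) ≠ 0}.Finite := by
    have hsub : {ℓ : ℤ | U.map (P j ℓ) ≠ 0} ⊆
        ⋃ p : Fin d × Fin d, {ℓ : ℤ | P j ℓ (U p.1 p.2) ≠ 0} := by
      intro ℓ hℓ
      by_contra hc
      apply hℓ
      simp only [Set.mem_iUnion, Set.mem_setOf_eq, not_exists, not_not] at hc
      ext i k
      simpa [Matrix.map_apply] using hc (i, k)
    exact Set.Finite.subset (Set.finite_iUnion fun p : Fin d × Fin d => hfin j (U p.1 p.2)) hsub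
  obtain ⟨L0, hL0⟩ := Set.Finite.bddAbove hfinU
  have main : ∀ n : ℕ, ∀ ℓ : ℤ, L0 < ℓ + n → U.map (P j ℓ) = 0 := by
    intro n
    induction n with
    | zero =>
      intro ℓ h
      by_contra hne
      have : ℓ ≤ L0 := hL0 hne
      omega
    | succ n ih =>
      intro ℓ h
      have h1 : U.map (P j (ℓ + 1)) = 0 := ih (ℓ + 1) (by push_cast at h ⊢; omega)
      have h2 := hrel j (ℓ + 1)
      rw [h1, Matrix.mul_zero, add_sub_cancel_right] at h2
      have hu : IsUnit M.det := isUnit_iff_ne_zero.mpr hMdet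
      have h3 : (U.map (P j ℓ)).map ⇑S = 0 := by
        calc (U.map (P j ℓ)).map ⇑S
            = (U.map (P j ℓ)).map ⇑S * (M * M⁻¹) := by
              rw [Matrix.mul_nonsing_inv _ hu, Matrix.mul_one]
          _ = ((U.map (P j ℓ)).map ⇑S * M) * M⁻¹ := by rw [Matrix.mul_assoc]
          _ = 0 := by rw [h2, Matrix.zero_mul]
      ext i k
      have := congrFun (congrFun h3 i) k
      simp only [Matrix.map_apply, Matrix.zero_apply] at this ⊢
      exact S.injective (by rw [this, map_zero])
  exact main (L0 + 1 - ℓ).toNat ℓ (by omega)
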